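/- The vertices of the order polytope O(P) of a finite poset P are exactly the characteristic vectors of order filters (upward-closed subsets) of P. -/

import Mathlib

open scoped Classical

/-- The order polytope of a poset `P`. -/
def orderPolytope (P : Type*) [PartialOrder P] : Set (P → ℝ) :=
  {x | (∀ p, 0 ≤ x p ∧ x p ≤ 1) ∧ ∀ p q : P, p ≤ q → x p ≤ x q}

/-- The vertices (extreme points) of the order polytope of a finite poset are
exactly the characteristic vectors of order filters (upward-closed subsets). -/
theorem orderPolytope_extremePoints (P : Type*) [PartialOrder P] [Fintype P]
    (x : P → ℝ) :
    x ∈ Set.extremePoints ℝ (orderPolytope P) ↔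
      ∃ U : Set P, (∀ p q : P, p ∈ U → p ≤ q → q ∈ U) ∧
        x = fun p => if p ∈ U then (1 : ℝ) else 0 := by
  constructor
  · rintro ⟨⟨hbd, hmono⟩, hext⟩
    -- First show x takes only values 0 and 1
    have h01 : ∀ p, x p = 0 ∨ x p = 1 := by
      by_contra h
      push_neg at h
      obtain ⟨p0, h0, h1⟩ := h
      have hlt0 : 0 < x p0 := lt_of_le_of_ne (hbd p0).1 (Ne.symm h0)
      have hlt1 : x p0 < 1 := lt_of_le_of_ne (hbd p0).2 h1
      -- the finite set of relevant positive gaps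
      set T : Finset ℝ := insert (x p0) (insert (1 - x p0)
        (Finset.image (fun pq : P × P => x pq.2 - x pq.1)
          ((Finset.univ ×ˢ Finset.univ).filter fun pq : P × P => x pq.1 < x pq.2))) with hT
      have hTne : T.Nonempty := ⟨x p0, by simp [hT]⟩
      set ε : ℝ := T.min' hTne with hεdef
      have hεpos : 0 < ε := by
        rw [hεdef, Finset.lt_min'_iff]
        intro b hb
        simp only [hT, Finset.mem_insert, Finset.mem_image, Finset.mem_filter] at hb
        rcases hb with rfl | rfl | ⟨pq, ⟨_, hlt⟩, rfl⟩
        · exact hlt0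
        · linarith
        · linarith
      have hεt : ε ≤ x p0 := Finset.min'_le _ _ (by simp [hT])
      have hε1 : ε ≤ 1 - x p0 := Finset.min'_le _ _ (by simp [hT])
      have hgap : ∀ p q : P, x p < x q → ε ≤ x q - x p := by
        intro p q hlt
        refine Finset.min'_le _ _ ?_
        simp only [hT, Finset.mem_insert, Finset.mem_image, Finset.mem_filter]
        exact Or.inr (Or.inr ⟨(p, q), ⟨by simp, hlt⟩, rfl⟩)
      set y : P → ℝ := fun p => x p + (if x p = x p0 then ε else 0) with hy
      set z : P → ℝ := fun p => x p - (if x p = x p0 then ε else 0) with hz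
      have hymem : y ∈ orderPolytope P := by
        constructor
        · intro p
          simp only [hy]
          split_ifs with hp
          · refine ⟨by linarith [(hbd p).1], ?_⟩
            rw [hp]; linarith
          · simpa using hbd p
        · intro p q hpq
          have := hmono p q hpq
          simp only [hy]
          split_ifs with hp hq hq
          · linarith
          · have : x p < x q := lt_of_le_of_ne this (by rw [hp]; exact fun h => hq h.symm)
            have := hgap p q this
            linarith
          · linarith
          · linarith
      have hzmem : z ∈ orderPolytope P := by
        constructor
        · intro p
          simp only [hz]
          split_ifs with hp
          · refine ⟨?_, by linarith [(hbd p).2]⟩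
            rw [hp]; linarith
          · simpa using hbd p
        · intro p q hpq
          have := hmono p q hpq
          simp only [hz]
          split_ifs with hp hq hq
          · linarith
          · linarith
          · have hlt : x p < x q := lt_of_le_of_ne this (fun h => hp (h.trans hq))
            have := hgap p q hlt
            linarith
          · linarith
      have hseg : x ∈ openSegment ℝ y z := by
        refine ⟨1/2, 1/2, by norm_num, by norm_num, by norm_num, ?_⟩
        funext p
        simp only [hy, hz, Pi.add_apply, Pi.smul_apply, smul_eq_mul]
        ring
      have := (hext hymem hzmem hseg)
      have h2 : x p0 + ε = x p0 := by simpa [hy] using congrFun this p0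
      linarith
    -- now take U = {p | x p = 1}
    refine ⟨{p | x p = 1}, ?_, ?_⟩
    · intro p q hp hpq
      have := hmono p q hpq
      have := (hbd q).2
      simp only [Set.mem_setOf_eq] at hp ⊢
      linarith
    · funext p
      rcases h01 p with h | h <;> simp [Set.mem_setOf_eq, h]
  · rintro ⟨U, hU, rfl⟩
    have hmem : (fun p => if p ∈ U then (1 : ℝ) else 0) ∈ orderPolytope P := by
      constructor
      · intro p; dsimp only; split_ifs <;> norm_num
      · intro p q hpq
        dsimp only
        split_ifs with hp hq hq
        · exact le_refl _
        · exact absurd (hU p q hp hpq) hq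
        · norm_num
        · exact le_refl _
    refine ⟨hmem, ?_⟩
    rintro y hy z hz ⟨a, b, ha, hb, hab, hsum⟩
    have key : y = (fun p => if p ∈ U then (1 : ℝ) else 0) ∧
        z = (fun p => if p ∈ U then (1 : ℝ) else 0) := by
      have hpt : ∀ p, a * y p + b * z p = (if p ∈ U then (1 : ℝ) else 0) := by
        intro p
        have := congrFun hsum p
        simpa using this
      constructor <;> funext p <;> [skip; skip] <;>
      · have h := hpt p
        have hy1 := (hy.1 p)
        have hz1 := (hz.1 p)
        split_ifs at h ⊢ with hp
        · nlinarith [hy1.2, hz1.2]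
        · nlinarith [hy1.1, hz1.1]
    exact key.1
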